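/- In the general model with treatment-effect restrictions τ = Γθ, the OLS-based efficient estimator has weight vector v* = (B₁; B₀) Γ (Γ'B₁Γ)⁻¹ Γ' w₁, where B₁ = I − Z₁(Z'Z)⁻¹Z₁' and B₀ = −Z₀(Z'Z)⁻¹Z₁'. Moreover, when Γ is invertible, B₀B₁⁻¹ = −Z₀(Z₀'Z₀)⁻¹Z₁', so the weights simplify to v₁* = w₁ and v₀* = −Z₀(Z₀'Z₀)⁻¹Z₁'w₁. -/

import Mathlib

open Matrix

set_option maxHeartbeats 1000000

lemma block_inv_aux {n k : Type*} [Fintype n] [Fintype k] [DecidableEq n] [DecidableEq k]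
    (A Ai : Matrix n n ℝ) (B : Matrix n k ℝ) (C : Matrix k n ℝ) (T S Si : Matrix k k ℝ)
    (hA : A * Ai = 1) (hT : T = S + C * (Ai * B)) (hS : S * Si = 1) :
    fromBlocks A B C T *
      fromBlocks (Ai + Ai * (B * (Si * (C * Ai)))) (-(Ai * (B * Si)))
        (-(Si * (C * Ai))) Si = 1 := by
  rw [fromBlocks_multiply, ← fromBlocks_one, fromBlocks_inj]
  refine ⟨?_, ?_, ?_, ?_⟩
  · simp only [Matrix.mul_add, Matrix.mul_neg, ← Matrix.mul_assoc, hA, Matrix.one_mul]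
    abel
  · simp only [Matrix.mul_neg, ← Matrix.mul_assoc, hA, Matrix.one_mul]
    abel
  · simp only [hT, Matrix.add_mul, Matrix.mul_add, Matrix.mul_neg, ← Matrix.mul_assoc, hS,
      Matrix.one_mul]
    abel
  · simp only [hT, Matrix.add_mul, Matrix.mul_neg, ← Matrix.mul_assoc, hS]
    abel

lemma dot_swap_aux {m n : Type*} [Fintype m] [Fintype n]
    (Q : Matrix m n ℝ) (x : n → ℝ) (y : m → ℝ) :
    x ⬝ᵥ (Qᵀ *ᵥ y) = (Q *ᵥ x) ⬝ᵥ y := by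
  rw [Matrix.dotProduct_mulVec, Matrix.vecMul_transpose]

/-- Weight representation of the OLS-based efficient estimator under a
treatment-effect model `τ = Γθ`.  With stacked covariates `Z = (Z₁; Z₀)`,
selection matrix `D` picking the treated rows, design `G = (Z, DΓ)` of full
column rank, `B₁ = I − Z₁(Z'Z)⁻¹Z₁'` and `B₀ = −Z₀(Z'Z)⁻¹Z₁'`, the
estimator `τ̂_w* = w₁'Γθ̂` (OLS `θ̂`) has weight vector
`v* = (B₁; B₀) Γ (Γ'B₁Γ)⁻¹ Γ' w₁`.  Moreover, if `Γ` is invertible, then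
`B₀B₁⁻¹ = −Z₀(Z₀'Z₀)⁻¹Z₁'`, so the weights simplify to `v₁* = w₁` and
`v₀* = −Z₀(Z₀'Z₀)⁻¹Z₁'w₁`. -/
theorem efficient_estimator_weights_general (N₁ N₀ p k : ℕ)
    (Z₁ : Matrix (Fin N₁) (Fin p) ℝ) (Z₀ : Matrix (Fin N₀) (Fin p) ℝ)
    (Z : Matrix (Fin N₁ ⊕ Fin N₀) (Fin p) ℝ) (hZ : Z = Matrix.of (Sum.elim Z₁ Z₀))
    (D : Matrix (Fin N₁ ⊕ Fin N₀) (Fin N₁) ℝ)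
    (hD : ∀ r j, D r j = if r = Sum.inl j then 1 else 0)
    (Γ : Matrix (Fin N₁) (Fin k) ℝ) (w₁ : Fin N₁ → ℝ)
    (G : Matrix (Fin N₁ ⊕ Fin N₀) (Fin p ⊕ Fin k) ℝ)
    (hG : G = Matrix.fromCols Z (D * Γ))
    (hrank : IsUnit (Gᵀ * G).det)
    (B₁ : Matrix (Fin N₁) (Fin N₁) ℝ)
    (hB₁ : B₁ = 1 - Z₁ * (Zᵀ * Z)⁻¹ * Z₁ᵀ)
    (B₀ : Matrix (Fin N₀) (Fin N₁) ℝ)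
    (hB₀ : B₀ = -(Z₀ * (Zᵀ * Z)⁻¹ * Z₁ᵀ))
    (hZZ : IsUnit (Zᵀ * Z).det)
    (hB₁inv : IsUnit B₁.det)
    (hZ₀ : IsUnit (Z₀ᵀ * Z₀).det)
    (hΓB : IsUnit (Γᵀ * B₁ * Γ).det)
    (u : Fin N₁ → ℝ)
    (hu : u = Γ *ᵥ ((Γᵀ * B₁ * Γ)⁻¹ *ᵥ (Γᵀ *ᵥ w₁)))
    (vstar : Fin N₁ ⊕ Fin N₀ → ℝ)
    (hvstar : vstar = Sum.elim (B₁ *ᵥ u) (B₀ *ᵥ u)) :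
    -- (a) weight representation of the OLS estimator τ̂_w* = w₁'Γθ̂:
    (∀ (Y : Fin N₁ ⊕ Fin N₀ → ℝ) (θhat : Fin k → ℝ)
      (_ : θhat = fun j => ((Gᵀ * G)⁻¹ *ᵥ (Gᵀ *ᵥ Y)) (Sum.inr j)),
      w₁ ⬝ᵥ (Γ *ᵥ θhat) = vstar ⬝ᵥ Y) ∧
    -- (b) the key algebraic identity:
    B₀ * B₁⁻¹ = -(Z₀ * (Z₀ᵀ * Z₀)⁻¹ * Z₁ᵀ) ∧
    -- (c) simplification when Γ is invertible:
    ((∃ Γi : Matrix (Fin k) (Fin N₁) ℝ, Γ * Γi = 1 ∧ Γi * Γ = 1) →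
      B₁ *ᵥ u = w₁ ∧ B₀ *ᵥ u = -(Z₀ *ᵥ ((Z₀ᵀ * Z₀)⁻¹ *ᵥ (Z₁ᵀ *ᵥ w₁)))) := by
  -- basic structure facts
  have hZr : Z = fromRows Z₁ Z₀ := hZ
  have hDr : D = fromRows (1 : Matrix (Fin N₁) (Fin N₁) ℝ) (0 : Matrix (Fin N₀) (Fin N₁) ℝ) := by
    ext r j
    cases r with
    | inl i => simp [hD, Matrix.one_apply, Sum.inl.injEq]
    | inr i => simp [hD]
  have hA : Zᵀ * Z = Z₁ᵀ * Z₁ + Z₀ᵀ * Z₀ := by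
    rw [hZr, transpose_fromRows, fromCols_mul_fromRows]
  have hAAi : (Zᵀ * Z) * (Zᵀ * Z)⁻¹ = 1 := mul_nonsing_inv _ hZZ
  have hAiT : ((Zᵀ * Z)⁻¹)ᵀ = (Zᵀ * Z)⁻¹ := by
    rw [Matrix.transpose_nonsing_inv, Matrix.transpose_mul, Matrix.transpose_transpose]
  have hB₁T : B₁ᵀ = B₁ := by
    rw [hB₁]
    simp [Matrix.transpose_sub, Matrix.transpose_mul, Matrix.transpose_transpose, hAiT,
      Matrix.mul_assoc]
  have hS : (Γᵀ * B₁ * Γ) * (Γᵀ * B₁ * Γ)⁻¹ = 1 := mul_nonsing_inv _ hΓB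
  have hSiT : ((Γᵀ * B₁ * Γ)⁻¹)ᵀ = (Γᵀ * B₁ * Γ)⁻¹ := by
    rw [Matrix.transpose_nonsing_inv]
    congr 1
    simp [Matrix.transpose_mul, Matrix.transpose_transpose, hB₁T, Matrix.mul_assoc]
  have hDZ : Dᵀ * Z = Z₁ := by
    rw [hDr, hZr, transpose_fromRows, fromCols_mul_fromRows]
    simp
  have hZD : Zᵀ * D = Z₁ᵀ := by
    rw [← Matrix.transpose_transpose D, ← Matrix.transpose_mul, hDZ]
  have hDD : Dᵀ * D = 1 := by
    rw [hDr, transpose_fromRows, fromCols_mul_fromRows]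
    simp
  have hGG : Gᵀ * G = fromBlocks (Zᵀ * Z) (Z₁ᵀ * Γ) (Γᵀ * Z₁) (Γᵀ * Γ) := by
    rw [hG, transpose_fromCols, fromRows_mul_fromCols, fromBlocks_inj]
    refine ⟨rfl, ?_, ?_, ?_⟩
    · rw [← Matrix.mul_assoc, hZD]
    · rw [Matrix.transpose_mul, Matrix.mul_assoc, hDZ]
    · rw [Matrix.transpose_mul, Matrix.mul_assoc, ← Matrix.mul_assoc Dᵀ, hDD, Matrix.one_mul]
  have hSchur : Γᵀ * Γ = (Γᵀ * B₁ * Γ) + Γᵀ * Z₁ * ((Zᵀ * Z)⁻¹ * (Z₁ᵀ * Γ)) := by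
    rw [hB₁]
    simp only [Matrix.mul_sub, Matrix.sub_mul, Matrix.mul_one, ← Matrix.mul_assoc]
    abel
  have hInv : (Gᵀ * G)⁻¹ =
      fromBlocks
        ((Zᵀ * Z)⁻¹ + (Zᵀ * Z)⁻¹ * (Z₁ᵀ * Γ * ((Γᵀ * B₁ * Γ)⁻¹ * (Γᵀ * Z₁ * (Zᵀ * Z)⁻¹))))
        (-((Zᵀ * Z)⁻¹ * (Z₁ᵀ * Γ * (Γᵀ * B₁ * Γ)⁻¹)))
        (-((Γᵀ * B₁ * Γ)⁻¹ * (Γᵀ * Z₁ * (Zᵀ * Z)⁻¹)))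
        ((Γᵀ * B₁ * Γ)⁻¹) := by
    refine inv_eq_right_inv ?_
    rw [hGG]
    exact block_inv_aux _ _ _ _ _ _ _ hAAi hSchur hS
  -- (b) first, it is used in (c)
  have hZ₁B : Z₁ᵀ * B₁ = Z₀ᵀ * Z₀ * ((Zᵀ * Z)⁻¹ * Z₁ᵀ) := by
    have h1 : Zᵀ * Z * ((Zᵀ * Z)⁻¹ * Z₁ᵀ) = Z₁ᵀ := by
      rw [← Matrix.mul_assoc, hAAi, Matrix.one_mul]
    calc Z₁ᵀ * B₁ = Z₁ᵀ - Z₁ᵀ * Z₁ * ((Zᵀ * Z)⁻¹ * Z₁ᵀ) := by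
          rw [hB₁]
          simp only [Matrix.mul_sub, Matrix.mul_one, Matrix.mul_assoc]
      _ = Zᵀ * Z * ((Zᵀ * Z)⁻¹ * Z₁ᵀ) - Z₁ᵀ * Z₁ * ((Zᵀ * Z)⁻¹ * Z₁ᵀ) := by rw [h1]
      _ = (Z₁ᵀ * Z₁ + Z₀ᵀ * Z₀) * ((Zᵀ * Z)⁻¹ * Z₁ᵀ) - Z₁ᵀ * Z₁ * ((Zᵀ * Z)⁻¹ * Z₁ᵀ) := by
          rw [hA]
      _ = Z₀ᵀ * Z₀ * ((Zᵀ * Z)⁻¹ * Z₁ᵀ) := by rw [Matrix.add_mul]; abel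
  have hB₀eq : B₀ = -(Z₀ * (Z₀ᵀ * Z₀)⁻¹ * Z₁ᵀ) * B₁ := by
    rw [hB₀]
    calc -(Z₀ * (Zᵀ * Z)⁻¹ * Z₁ᵀ)
        = -(Z₀ * ((Z₀ᵀ * Z₀)⁻¹ * (Z₀ᵀ * Z₀ * ((Zᵀ * Z)⁻¹ * Z₁ᵀ)))) := by
          rw [← Matrix.mul_assoc (Z₀ᵀ * Z₀)⁻¹, nonsing_inv_mul _ hZ₀, Matrix.one_mul,
            Matrix.mul_assoc]
      _ = -(Z₀ * (Z₀ᵀ * Z₀)⁻¹ * Z₁ᵀ) * B₁ := by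
          rw [← hZ₁B]
          simp only [Matrix.neg_mul, Matrix.mul_assoc]
  have hb : B₀ * B₁⁻¹ = -(Z₀ * (Z₀ᵀ * Z₀)⁻¹ * Z₁ᵀ) := by
    rw [hB₀eq, Matrix.mul_assoc, mul_nonsing_inv _ hB₁inv, Matrix.mul_one]
  -- the weight vector as a single matrix applied to u
  have hu' : u = (Γ * ((Γᵀ * B₁ * Γ)⁻¹ * Γᵀ)) *ᵥ w₁ := by
    rw [hu, Matrix.mulVec_mulVec, Matrix.mulVec_mulVec, Matrix.mul_assoc]
  have hDZmat : D - Z * ((Zᵀ * Z)⁻¹ * Z₁ᵀ) = fromRows B₁ B₀ := by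
    rw [hDr]
    nth_rewrite 1 [hZr]
    rw [fromRows_mul]
    ext r j
    cases r with
    | inl i => simp [hB₁, Matrix.sub_apply, Matrix.mul_assoc]
    | inr i => simp [hB₀, Matrix.sub_apply, Matrix.mul_assoc]
  have hvstar' : vstar = (D - Z * ((Zᵀ * Z)⁻¹ * Z₁ᵀ)) *ᵥ u := by
    rw [hvstar, hDZmat, fromRows_mulVec]
  set Ai := (Zᵀ * Z)⁻¹ with hAidef
  set Si := (Γᵀ * B₁ * Γ)⁻¹ with hSidef
  refine ⟨?_, hb, ?_⟩
  · -- part (a)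
    intro Y θhat hθ
    have hGT : Gᵀ = fromRows Zᵀ (Γᵀ * Dᵀ) := by
      rw [hG, transpose_fromCols, Matrix.transpose_mul]
    have hGTY : Gᵀ *ᵥ Y = Sum.elim (Zᵀ *ᵥ Y) ((Γᵀ * Dᵀ) *ᵥ Y) := by
      rw [hGT, fromRows_mulVec]
    have hθ2 : θhat =
        -(Si * (Γᵀ * Z₁ * Ai)) *ᵥ (Zᵀ *ᵥ Y) + Si *ᵥ ((Γᵀ * Dᵀ) *ᵥ Y) := by
      funext j
      simp only [hθ, hInv, hGTY, fromBlocks_mulVec, Sum.elim_comp_inl, Sum.elim_comp_inr,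
        Sum.elim_inr, Pi.add_apply]
    have hkey : Γ * (Si * (Γᵀ * Dᵀ)) - Γ * (Si * (Γᵀ * Z₁ * Ai) * Zᵀ) =
        ((D - Z * (Ai * Z₁ᵀ)) * (Γ * (Si * Γᵀ)))ᵀ := by
      simp only [Matrix.transpose_mul, Matrix.transpose_sub, Matrix.transpose_transpose,
        hAiT, hSiT, Matrix.sub_mul, Matrix.mul_sub, Matrix.mul_assoc]
    have hΓθ : Γ *ᵥ θhat =
        (Γ * (Si * (Γᵀ * Dᵀ)) - Γ * (Si * (Γᵀ * Z₁ * Ai) * Zᵀ)) *ᵥ Y := by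
      rw [hθ2]
      simp only [Matrix.mulVec_add, Matrix.mulVec_mulVec, Matrix.sub_mulVec,
        Matrix.neg_mulVec, Matrix.mulVec_neg, Matrix.mul_neg, Matrix.neg_mul, Matrix.smul_mulVec,
        Matrix.mulVec_smul, Matrix.mul_assoc]
      abel
    rw [hΓθ, hkey, dot_swap_aux, hvstar', hu', Matrix.mulVec_mulVec]
  · -- part (c)
    rintro ⟨Γi, h1, h2⟩
    have hB₁B : B₁ * B₁⁻¹ = 1 := mul_nonsing_inv _ hB₁inv
    have hSiinv : Si = Γi * (B₁⁻¹ * Γiᵀ) := by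
      rw [hSidef]
      refine inv_eq_right_inv ?_
      calc Γᵀ * B₁ * Γ * (Γi * (B₁⁻¹ * Γiᵀ))
          = Γᵀ * (B₁ * ((Γ * Γi) * (B₁⁻¹ * Γiᵀ))) := by simp only [Matrix.mul_assoc]
        _ = Γᵀ * Γiᵀ := by
            rw [h1, Matrix.one_mul, ← Matrix.mul_assoc B₁, hB₁B, Matrix.one_mul]
        _ = 1 := by rw [← Matrix.transpose_mul, h2, Matrix.transpose_one]
    have hQ : Γ * (Si * Γᵀ) = B₁⁻¹ := by
      rw [hSiinv]
      calc Γ * (Γi * (B₁⁻¹ * Γiᵀ) * Γᵀ)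
          = (Γ * Γi) * (B₁⁻¹ * (Γiᵀ * Γᵀ)) := by simp only [Matrix.mul_assoc]
        _ = B₁⁻¹ := by
            rw [h1, ← Matrix.transpose_mul, h1, Matrix.transpose_one, Matrix.one_mul,
              Matrix.mul_one]
    have hu'' : u = B₁⁻¹ *ᵥ w₁ := by rw [hu', hQ]
    constructor
    · rw [hu'', Matrix.mulVec_mulVec, hB₁B, Matrix.one_mulVec]
    · rw [hu'', Matrix.mulVec_mulVec, hb]
      simp [Matrix.neg_mulVec, Matrix.mulVec_mulVec, Matrix.mul_assoc]
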